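/- (Singer) Let f : I → I be a C^3 map of a compact interval with negative Schwarzian derivative. Then the immediate basin of any attracting periodic orbit of f contains either a critical point of f (a point where Df vanishes) or a boundary point of I. -/

import Mathlib

open Set Filter Topology

/-- The Schwarzian derivative of `f` at `x`:
`Sf(x) = D³f(x)/Df(x) − (3/2)·(D²f(x)/Df(x))²`. -/
noncomputable def schwarzian (f : ℝ → ℝ) (x : ℝ) : ℝ :=
  iteratedDeriv 3 f x / deriv f x - (3 / 2) * (iteratedDeriv 2 f x / deriv f x) ^ 2

lemma contDiff_iterate (f : ℝ → ℝ) (hf : ContDiff ℝ 3 f) (n : ℕ) : ContDiff ℝ 3 (f^[n]) := by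
  induction n with
  | zero => simpa using contDiff_id
  | succ n ih => rw [Function.iterate_succ]; exact ih.comp hf

lemma deriv_contDiff2 (f : ℝ → ℝ) (hf : ContDiff ℝ 3 f) : ContDiff ℝ 2 (deriv f) := by
  have : ContDiff ℝ (2 + 1 : ℕ) f := by exact_mod_cast hf
  exact (contDiff_succ_iff_deriv.1 (by exact_mod_cast this)).2.2

lemma deriv2_contDiff1 (f : ℝ → ℝ) (hf : ContDiff ℝ 3 f) : ContDiff ℝ 1 (deriv (deriv f)) := by
  have h2 := deriv_contDiff2 f hf
  have : ContDiff ℝ (1 + 1 : ℕ) (deriv f) := by exact_mod_cast h2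
  exact (contDiff_succ_iff_deriv.1 (by exact_mod_cast this)).2.2

lemma deriv3_diff (f : ℝ → ℝ) (hf : ContDiff ℝ 3 f) : Differentiable ℝ (deriv (deriv f)) :=
  (deriv2_contDiff1 f hf).differentiable (by norm_num)

lemma hasDerivAt_iterate (f : ℝ → ℝ) (hf : Differentiable ℝ f) (n : ℕ) (x : ℝ) :
    HasDerivAt (f^[n]) (∏ i ∈ Finset.range n, deriv f (f^[i] x)) x := by
  induction n with
  | zero => simpa using hasDerivAt_id x
  | succ n ih =>
    rw [Function.iterate_succ']
    have h1 : HasDerivAt f (deriv f (f^[n] x)) (f^[n] x) := (hf _).hasDerivAt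
    have h2 : HasDerivAt (f ∘ f^[n]) (deriv f (f^[n] x) * ∏ i ∈ Finset.range n, deriv f (f^[i] x)) x :=
      h1.comp x ih
    rw [Finset.prod_range_succ]
    convert h2 using 1
    ring

lemma deriv_iterate (f : ℝ → ℝ) (hf : Differentiable ℝ f) (n : ℕ) (x : ℝ) :
    deriv (f^[n]) x = ∏ i ∈ Finset.range n, deriv f (f^[i] x) :=
  (hasDerivAt_iterate f hf n x).deriv

lemma iteratedDeriv_two' (f : ℝ → ℝ) : iteratedDeriv 2 f = deriv (deriv f) := by
  rw [show (2:ℕ) = 1 + 1 from rfl, iteratedDeriv_succ, iteratedDeriv_one]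

lemma iteratedDeriv_three' (f : ℝ → ℝ) : iteratedDeriv 3 f = deriv (deriv (deriv f)) := by
  rw [show (3:ℕ) = 2 + 1 from rfl, iteratedDeriv_succ, iteratedDeriv_two']

lemma schwarzian_comp (g f : ℝ → ℝ) (hg : ContDiff ℝ 3 g) (hf : ContDiff ℝ 3 f) (x : ℝ)
    (hf' : deriv f x ≠ 0) (hg' : deriv g (f x) ≠ 0) :
    schwarzian (g ∘ f) x = schwarzian g (f x) * (deriv f x) ^ 2 + schwarzian f x := by
  have hfd : Differentiable ℝ f := hf.differentiable (by norm_num)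
  have hgd : Differentiable ℝ g := hg.differentiable (by norm_num)
  have hf1 : Differentiable ℝ (deriv f) := (deriv_contDiff2 f hf).differentiable (by norm_num)
  have hg1 : Differentiable ℝ (deriv g) := (deriv_contDiff2 g hg).differentiable (by norm_num)
  have hf2 : Differentiable ℝ (deriv (deriv f)) := deriv3_diff f hf
  have hg2 : Differentiable ℝ (deriv (deriv g)) := deriv3_diff g hg
  set F1 := deriv f
  set F2 := deriv (deriv f)
  set F3 := deriv (deriv (deriv f))
  set G1 := deriv g
  set G2 := deriv (deriv g)
  set G3 := deriv (deriv (deriv g))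
  have e1 : deriv (g ∘ f) = fun y => G1 (f y) * F1 y := by
    funext y
    exact (((hgd (f y)).hasDerivAt).comp y ((hfd y).hasDerivAt)).deriv
  have e2 : deriv (deriv (g ∘ f)) = fun y => G2 (f y) * F1 y * F1 y + G1 (f y) * F2 y := by
    rw [e1]
    funext y
    have t1 : HasDerivAt (fun z => G1 (f z)) (G2 (f y) * F1 y) y :=
      ((hg1 (f y)).hasDerivAt).comp y ((hfd y).hasDerivAt)
    exact (t1.mul ((hf1 y).hasDerivAt)).deriv
  have e3 : deriv (deriv (deriv (g ∘ f))) x =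
      (G3 (f x) * F1 x * F1 x + G2 (f x) * F2 x) * F1 x + G2 (f x) * F1 x * F2 x
        + (G2 (f x) * F1 x * F2 x + G1 (f x) * F3 x) := by
    rw [e2]
    have t1 : HasDerivAt (fun z => G2 (f z)) (G3 (f x) * F1 x) x :=
      ((hg2 (f x)).hasDerivAt).comp x ((hfd x).hasDerivAt)
    have t2 : HasDerivAt (fun z => G2 (f z) * F1 z)
        (G3 (f x) * F1 x * F1 x + G2 (f x) * F2 x) x := t1.mul ((hf1 x).hasDerivAt)
    have t3 : HasDerivAt (fun z => G2 (f z) * F1 z * F1 z)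
        ((G3 (f x) * F1 x * F1 x + G2 (f x) * F2 x) * F1 x + G2 (f x) * F1 x * F2 x) x :=
      t2.mul ((hf1 x).hasDerivAt)
    have t4 : HasDerivAt (fun z => G1 (f z)) (G2 (f x) * F1 x) x :=
      ((hg1 (f x)).hasDerivAt).comp x ((hfd x).hasDerivAt)
    have t5 : HasDerivAt (fun z => G1 (f z) * F2 z)
        (G2 (f x) * F1 x * F2 x + G1 (f x) * F3 x) x := t4.mul ((hf2 x).hasDerivAt)
    exact (t3.add t5).deriv
  have e1x : deriv (g ∘ f) x = G1 (f x) * F1 x := by rw [e1]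
  have e2x : iteratedDeriv 2 (g ∘ f) x = G2 (f x) * F1 x * F1 x + G1 (f x) * F2 x := by
    rw [iteratedDeriv_two', e2]
  have e3x : iteratedDeriv 3 (g ∘ f) x =
      (G3 (f x) * F1 x * F1 x + G2 (f x) * F2 x) * F1 x + G2 (f x) * F1 x * F2 x
        + (G2 (f x) * F1 x * F2 x + G1 (f x) * F3 x) := by
    rw [iteratedDeriv_three', e3]
  unfold schwarzian
  rw [e1x, e2x, e3x, iteratedDeriv_two', iteratedDeriv_two', iteratedDeriv_three',
    iteratedDeriv_three']
  rw [show deriv (deriv (deriv f)) = F3 from rfl, show deriv (deriv f) = F2 from rfl,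
    show deriv f = F1 from rfl, show deriv (deriv (deriv g)) = G3 from rfl,
    show deriv (deriv g) = G2 from rfl, show deriv g = G1 from rfl]
  field_simp
  ring


lemma deriv_iterate_ne (f : ℝ → ℝ) (hf : Differentiable ℝ f) (n : ℕ) (x : ℝ)
    (hd : ∀ i < n, deriv f (f^[i] x) ≠ 0) : deriv (f^[n]) x ≠ 0 := by
  rw [deriv_iterate f hf n x]
  exact Finset.prod_ne_zero_iff.2 fun i hi => hd i (Finset.mem_range.1 hi)

lemma schwarzian_iterate (f : ℝ → ℝ) (hf : ContDiff ℝ 3 f) (n : ℕ) (hn : 0 < n) (x : ℝ)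
    (hd : ∀ i < n, deriv f (f^[i] x) ≠ 0) (hs : ∀ i < n, schwarzian f (f^[i] x) < 0) :
    schwarzian (f^[n]) x < 0 := by
  induction n generalizing x with
  | zero => omega
  | succ n ih =>
    rcases Nat.eq_zero_or_pos n with h0 | hpos
    · subst h0
      simpa [Function.iterate_one] using hs 0 (by norm_num)
    · have hfd : Differentiable ℝ f := hf.differentiable (by norm_num)
      have hd0 : deriv f x ≠ 0 := by simpa using hd 0 (by omega)
      have hdn : ∀ i < n, deriv f (f^[i] (f x)) ≠ 0 := fun i hi => by
        rw [← Function.iterate_succ_apply]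
        exact hd (i + 1) (by omega)
      have hsn : ∀ i < n, schwarzian f (f^[i] (f x)) < 0 := fun i hi => by
        rw [← Function.iterate_succ_apply]
        exact hs (i + 1) (by omega)
      have hgn : deriv (f^[n]) (f x) ≠ 0 := deriv_iterate_ne f hfd n (f x) hdn
      have := schwarzian_comp (f^[n]) f (contDiff_iterate f hf n) hf x hd0 hgn
      rw [Function.iterate_succ]
      rw [this]
      have h1 : schwarzian (f^[n]) (f x) < 0 := ih (x := f x) hpos hdn hsn
      have h2 : schwarzian f x < 0 := by simpa using hs 0 (by omega)
      have : schwarzian (f^[n]) (f x) * deriv f x ^ 2 < 0 :=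
        mul_neg_of_neg_of_pos h1 (by positivity)
      linarith

lemma min_principle (h : ℝ → ℝ) (α β pt : ℝ) (hC : ContDiff ℝ 3 h)
    (h1 : α < pt) (h2 : pt < β)
    (hpos : ∀ x ∈ Ioo α β, 0 < deriv h x)
    (hneg : ∀ x ∈ Ioo α β, schwarzian h x < 0) :
    min (deriv h α) (deriv h β) ≤ deriv h pt := by
  set v := deriv h with hv
  have hvC : ContDiff ℝ 2 v := deriv_contDiff2 h hC
  have hv1 : Differentiable ℝ v := hvC.differentiable (by norm_num)
  have hv1' : Differentiable ℝ (deriv v) := by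
    have : ContDiff ℝ (1+1 : ℕ) v := by exact_mod_cast hvC
    exact ((contDiff_succ_iff_deriv (n := 1)).1 (by exact_mod_cast this)).2.2.differentiable (by norm_num)
  have hvcont : Continuous v := hv1.continuous
  set u : ℝ → ℝ := fun y => v y ^ (-(1/2) : ℝ) with hu
  set w : ℝ → ℝ := fun y => (-(1/2)) * v y ^ (-(3/2) : ℝ) * deriv v y with hw
  have hud : ∀ y ∈ Ioo α β, HasDerivAt u (w y) y := by
    intro y hy
    have h0 : v y ≠ 0 := (hpos y hy).ne'
    have : HasDerivAt (fun z => v z ^ (-(1/2) : ℝ)) (-(1/2) * v y ^ (-(1/2) - 1 : ℝ) * deriv v y) y :=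
      (Real.hasDerivAt_rpow_const (p := (-(1/2) : ℝ)) (Or.inl h0)).comp y (hv1 y).hasDerivAt
    convert this using 1
    show -(1/2) * v y ^ (-(3/2) : ℝ) * deriv v y = _
    norm_num
  -- second derivative positivity
  have hu2 : ∀ y ∈ Ioo α β, 0 < deriv (deriv u) y := by
    intro y hy
    have hmem : Ioo α β ∈ 𝓝 y := (isOpen_Ioo).mem_nhds hy
    have heq : deriv u =ᶠ[𝓝 y] w :=
      Filter.eventuallyEq_of_mem hmem (fun z hz => (hud z hz).deriv)
    rw [heq.deriv_eq]
    have h0 : 0 < v y := hpos y hy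
    have hw1 : HasDerivAt (fun z => v z ^ (-(3/2) : ℝ))
        ((-(3/2)) * v y ^ (-(3/2) - 1 : ℝ) * deriv v y) y := by
      have : HasDerivAt (fun z => v z ^ (-(3/2) : ℝ))
          ((-(3/2)) * v y ^ (-(3/2) - 1 : ℝ) * deriv v y) y :=
        (Real.hasDerivAt_rpow_const (p := (-(3/2) : ℝ)) (Or.inl h0.ne')).comp y
        (hv1 y).hasDerivAt
      convert this using 1
    have hw2 : HasDerivAt w
        ((-(1/2)) * ((-(3/2)) * v y ^ (-(3/2) - 1 : ℝ) * deriv v y) * deriv v y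
          + (-(1/2)) * v y ^ (-(3/2) : ℝ) * deriv (deriv v) y) y := by
      have : HasDerivAt w ((-(1/2)) * ((-(3/2)) * v y ^ (-(3/2) - 1 : ℝ) * deriv v y) * deriv v y
          + (-(1/2)) * v y ^ (-(3/2) : ℝ) * deriv (deriv v) y) y :=
        ((hw1.const_mul (-(1/2) : ℝ)).mul ((hv1' y).hasDerivAt))
      convert this using 1
    rw [hw2.deriv]
    have key : (-(1/2)) * ((-(3/2)) * v y ^ (-(3/2) - 1 : ℝ) * deriv v y) * deriv v y
          + (-(1/2)) * v y ^ (-(3/2) : ℝ) * deriv (deriv v) y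
        = (-(1/2)) * v y ^ (-(1/2) : ℝ) * schwarzian h y := by
      have hs32 : v y ^ (-(3/2) : ℝ) = v y ^ (-(1/2) : ℝ) * (v y)⁻¹ := by
        rw [← Real.rpow_neg_one (v y), ← Real.rpow_add h0]; norm_num
      have hs52 : v y ^ (-(3/2) - 1 : ℝ) = v y ^ (-(1/2) : ℝ) * (v y)⁻¹ * (v y)⁻¹ := by
        rw [← Real.rpow_neg_one (v y), ← Real.rpow_add h0, ← Real.rpow_add h0]; norm_num
      rw [hs32, hs52]
      unfold schwarzian
      rw [iteratedDeriv_succ, iteratedDeriv_succ, iteratedDeriv_one]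
      rw [← hv]
      field_simp
      ring
    rw [key]
    have hrp : 0 < v y ^ (-(1/2) : ℝ) := Real.rpow_pos_of_pos h0 _
    nlinarith [hneg y hy]
  -- convexity of u on Ioo α β
  have hconv : StrictConvexOn ℝ (Ioo α β) u := by
    apply strictConvexOn_of_deriv2_pos (convex_Ioo α β)
    · intro y hy
      exact ((hud y hy).differentiableAt.continuousAt).continuousWithinAt
    · intro y hy
      rw [interior_Ioo] at hy
      simpa [Function.iterate_succ, Function.iterate_one] using hu2 y hy
  -- key inequality for interior points
  have hmin : ∀ x₁ ∈ Ioo α pt, ∀ x₂ ∈ Ioo pt β, min (v x₁) (v x₂) ≤ v pt := by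
    intro x₁ hx₁ x₂ hx₂
    have hx₁' : x₁ ∈ Ioo α β := ⟨hx₁.1, hx₁.2.trans h2⟩
    have hx₂' : x₂ ∈ Ioo α β := ⟨h1.trans hx₂.1, hx₂.2⟩
    have hptm : pt ∈ segment ℝ x₁ x₂ := by
      rw [segment_eq_Icc (le_of_lt (hx₁.2.trans hx₂.1))]
      exact ⟨le_of_lt hx₁.2, le_of_lt hx₂.1⟩
    have := hconv.convexOn.le_on_segment hx₁' hx₂' hptm
    -- u pt ≤ max (u x₁) (u x₂)
    have hpt : pt ∈ Ioo α β := ⟨h1, h2⟩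
    rcases le_max_iff.1 this with hc | hc
    · have := (Real.rpow_le_rpow_iff_of_neg (hpos pt hpt) (hpos x₁ hx₁') (by norm_num : (-(1/2):ℝ) < 0)).1 hc
      exact le_trans (min_le_left _ _) this
    · have := (Real.rpow_le_rpow_iff_of_neg (hpos pt hpt) (hpos x₂ hx₂') (by norm_num : (-(1/2):ℝ) < 0)).1 hc
      exact le_trans (min_le_right _ _) this
  -- take limits x₁ → α, x₂ → β
  have step1 : ∀ x₂ ∈ Ioo pt β, min (v α) (v x₂) ≤ v pt := by
    intro x₂ hx₂
    have hlim : Tendsto (fun x₁ => min (v x₁) (v x₂)) (𝓝[>] α) (𝓝 (min (v α) (v x₂))) :=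
      ((hvcont.tendsto α).mono_left nhdsWithin_le_nhds).min tendsto_const_nhds
    refine le_of_tendsto hlim ?_
    filter_upwards [Ioo_mem_nhdsGT_of_mem ⟨le_refl α, h1⟩] with x₁ hx₁
    exact hmin x₁ hx₁ x₂ hx₂
  have hlim2 : Tendsto (fun x₂ => min (v α) (v x₂)) (𝓝[<] β) (𝓝 (min (v α) (v β))) :=
    tendsto_const_nhds.min ((hvcont.tendsto β).mono_left nhdsWithin_le_nhds)
  refine le_of_tendsto hlim2 ?_
  filter_upwards [Ioo_mem_nhdsLT_of_mem ⟨h2, le_refl β⟩] with x₂ hx₂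
  exact step1 x₂ hx₂


lemma attract (f : ℝ → ℝ) (hf : ContDiff ℝ 3 f) (a b : ℝ)
    (hmaps : MapsTo f (Icc a b) (Icc a b)) (orb : Set ℝ)
    (M : ℕ) (hM : 0 < M) (q : ℝ) (hq : q ∈ Icc a b) (hfix : f^[M] q = q)
    (hq_orb : ∀ r : ℕ, f^[r] q ∈ orb) (hmult : |deriv (f^[M]) q| < 1) :
    ∃ δ > 0, ∀ y ∈ Icc a b, |y - q| ≤ δ →
      Tendsto (fun n => Metric.infDist (f^[n] y) orb) atTop (𝓝 0) := by
  set h := f^[M] with hh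
  have hCh : ContDiff ℝ 3 h := contDiff_iterate f hf M
  have hdiff : Differentiable ℝ h := hCh.differentiable (by norm_num)
  have hdh : Continuous (deriv h) := (deriv_contDiff2 h hCh).continuous
  set μ := (|deriv h q| + 1) / 2 with hμdef
  have habs : 0 ≤ |deriv h q| := abs_nonneg _
  have hμ1 : μ < 1 := by rw [hμdef]; linarith
  have hμ0 : 0 ≤ μ := by rw [hμdef]; positivity
  have hqμ : |deriv h q| < μ := by rw [hμdef]; linarith
  have hopen : IsOpen {x : ℝ | |deriv h x| < μ} :=
    isOpen_lt (continuous_abs.comp hdh) continuous_const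
  obtain ⟨ε, hε0, hball⟩ := Metric.isOpen_iff.1 hopen q hqμ
  set δ := ε / 2 with hδdef
  have hδ0 : 0 < δ := by rw [hδdef]; positivity
  have hbound : ∀ x : ℝ, |x - q| ≤ δ → |deriv h x| ≤ μ := by
    intro x hx
    have hx' : x ∈ Metric.ball q ε := by
      rw [Metric.mem_ball, Real.dist_eq]
      rw [hδdef] at hx; linarith
    exact le_of_lt (hball hx')
  refine ⟨δ, hδ0, ?_⟩
  intro y hy hyq
  have hmapsM : ∀ k : ℕ, MapsTo (f^[k]) (Icc a b) (Icc a b) := fun k => hmaps.iterate k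
  have key : ∀ n : ℕ, f^[M*n] y ∈ Icc a b ∧ |f^[M*n] y - q| ≤ μ ^ n * |y - q| := by
    intro n
    induction n with
    | zero => simpa using hy
    | succ n ih =>
      obtain ⟨hz1, hz2⟩ := ih
      set z := f^[M*n] y with hz
      have hzq : |z - q| ≤ δ := by
        calc |z - q| ≤ μ ^ n * |y - q| := hz2
        _ ≤ 1 * δ := mul_le_mul (pow_le_one₀ hμ0 (le_of_lt hμ1)) hyq (abs_nonneg _) one_pos.le
        _ = δ := one_mul δ
      have hstep : f^[M*(n+1)] y = h z := by
        rw [show M*(n+1) = M + M*n by ring, Function.iterate_add_apply, hh]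
      constructor
      · rw [hstep]; exact hmapsM M hz1
      · rw [hstep]
        have hmvt : ‖h z - h q‖ ≤ μ * ‖z - q‖ := by
          apply Convex.norm_image_sub_le_of_norm_deriv_le (s := Metric.closedBall q δ)
            (fun x _ => (hdiff x)) ?_ (convex_closedBall q δ) ?_ ?_
          · intro x hx
            rw [Metric.mem_closedBall, Real.dist_eq] at hx
            rw [Real.norm_eq_abs]
            exact hbound x hx
          · exact Metric.mem_closedBall_self (le_of_lt hδ0)
          · rw [Metric.mem_closedBall, Real.dist_eq]; exact hzq
        rw [hfix] at hmvt
        rw [Real.norm_eq_abs, Real.norm_eq_abs] at hmvt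
        calc |h z - q| ≤ μ * |z - q| := hmvt
        _ ≤ μ * (μ ^ n * |y - q|) := by
            apply mul_le_mul_of_nonneg_left hz2 hμ0
        _ = μ ^ (n+1) * |y - q| := by ring
  rw [Metric.tendsto_atTop]
  intro ε' hε'
  have hUopen : IsOpen (⋂ r ∈ Finset.range M, {z : ℝ | dist (f^[r] z) (f^[r] q) < ε'}) := by
    apply isOpen_biInter_finset
    intro r _
    exact isOpen_lt (Continuous.dist ((contDiff_iterate f hf r).continuous) continuous_const)
      continuous_const
  have hqU : q ∈ ⋂ r ∈ Finset.range M, {z : ℝ | dist (f^[r] z) (f^[r] q) < ε'} := by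
    simp only [Set.mem_iInter, Set.mem_setOf_eq]
    intro r _
    simpa using hε'
  obtain ⟨η, hη0, hηball⟩ := Metric.isOpen_iff.1 hUopen q hqU
  have htend : Tendsto (fun n : ℕ => μ ^ n * |y - q|) atTop (𝓝 0) := by
    simpa using (tendsto_pow_atTop_nhds_zero_of_lt_one hμ0 hμ1).mul_const |y - q|
  obtain ⟨N₁, hN₁⟩ := Filter.eventually_atTop.1 (htend.eventually_lt_const hη0)
  refine ⟨M * (N₁ + 1), fun n hn => ?_⟩
  set k := n / M with hk
  set r := n % M with hr
  have hrM : r < M := Nat.mod_lt n hM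
  have hkN : N₁ ≤ k := by
    rw [hk]
    have : N₁ + 1 ≤ n / M := (Nat.le_div_iff_mul_le hM).2 (by rw [Nat.mul_comm]; exact hn)
    omega
  have hnrk : r + M * k = n := by rw [hr, hk, Nat.add_comm]; exact Nat.div_add_mod n M
  have hsplit : f^[n] y = f^[r] (f^[M*k] y) := by
    rw [← hnrk, Function.iterate_add_apply]
  set z := f^[M*k] y with hzdef
  have hzq : |z - q| < η := by
    calc |z - q| ≤ μ ^ k * |y - q| := (key k).2
    _ ≤ μ ^ N₁ * |y - q| :=
        mul_le_mul_of_nonneg_right (pow_le_pow_of_le_one hμ0 (le_of_lt hμ1) hkN) (abs_nonneg _)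
    _ < η := hN₁ N₁ le_rfl
  have hzU : z ∈ Metric.ball q η := by rw [Metric.mem_ball, Real.dist_eq]; exact hzq
  have := hηball hzU
  simp only [Set.mem_iInter, Set.mem_setOf_eq] at this
  have hclose : dist (f^[r] z) (f^[r] q) < ε' := this r (Finset.mem_range.2 hrM)
  have hle : Metric.infDist (f^[n] y) orb ≤ dist (f^[r] z) (f^[r] q) := by
    rw [hsplit]
    exact Metric.infDist_le_dist_of_mem (hq_orb r)
  rw [Real.dist_eq, sub_zero, abs_of_nonneg Metric.infDist_nonneg]
  exact lt_of_le_of_lt hle hclose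

/-- Singer's theorem: for a `C³` map `f` of the compact interval `[a,b]` into itself
with negative Schwarzian derivative, the immediate basin of any attracting periodic
orbit contains either a critical point of `f` or a boundary point of `[a,b]`. -/
theorem singer (f : ℝ → ℝ) (a b : ℝ) (hab : a < b)
    (hf : ContDiff ℝ 3 f)
    (hmaps : MapsTo f (Icc a b) (Icc a b))
    (hS : ∀ x ∈ Icc a b, deriv f x ≠ 0 → schwarzian f x < 0)
    (p : ℝ) (hp : p ∈ Icc a b) (m : ℕ) (hm : 1 ≤ m)
    (hper : f^[m] p = p) (hatt : |deriv (f^[m]) p| < 1) :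
    -- the orbit of `p`
    let orb : Set ℝ := (fun i => f^[i] p) '' Set.Iio m
    -- the basin of attraction of the orbit
    let basin : Set ℝ :=
      {x | x ∈ Icc a b ∧ Tendsto (fun n => Metric.infDist (f^[n] x) orb) atTop (𝓝 0)}
    -- the immediate basin: union of the components of the basin meeting the orbit
    let ib : Set ℝ := ⋃ i ∈ Finset.range m, connectedComponentIn basin (f^[i] p)
    ∃ x ∈ ib, deriv f x = 0 ∨ x = a ∨ x = b := by
  intro orb basin ib
  by_contra hcon
  push_neg at hcon
  -- hcon : ∀ x ∈ ib, deriv f x ≠ 0 ∧ x ≠ a ∧ x ≠ b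
  have hm0 : 0 < m := hm
  have hm2 : 0 < 2 * m := by omega
  have hfd : Differentiable ℝ f := hf.differentiable (by norm_num)
  have hfc : Continuous f := hfd.continuous
  -- periodicity mod m
  have hmm : ∀ j : ℕ, f^[m * j] p = p := by
    intro j
    induction j with
    | zero => simp
    | succ j ih =>
      rw [show m * (j + 1) = m * j + m by ring, Function.iterate_add_apply, hper, ih]
  have hmod : ∀ k : ℕ, f^[k] p = f^[k % m] p := by
    intro k
    conv_lhs => rw [← Nat.mod_add_div k m]
    rw [Function.iterate_add_apply, hmm]
  have horb_mem : ∀ k : ℕ, f^[k] p ∈ orb := by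
    intro k
    exact ⟨k % m, Set.mem_Iio.2 (Nat.mod_lt k hm0), (hmod k).symm⟩
  have horb_fin : orb.Finite := (Set.finite_Iio m).image _
  have horb_closed : IsClosed orb := horb_fin.isClosed
  have horb_ne : orb.Nonempty := ⟨f^[0] p, horb_mem 0⟩
  -- basin facts
  have hbasin_sub : basin ⊆ Icc a b := fun x hx => hx.1
  have horb_basin : ∀ k : ℕ, f^[k] p ∈ basin := by
    intro k
    refine ⟨hmaps.iterate k hp, ?_⟩
    have he : (fun n => Metric.infDist (f^[n] (f^[k] p)) orb) = fun _ => (0 : ℝ) := by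
      funext n
      rw [← Function.iterate_add_apply]
      exact Metric.infDist_zero_of_mem (horb_mem (n + k))
    rw [he]
    exact tendsto_const_nhds
  have hp_basin : p ∈ basin := horb_basin 0
  have hback : ∀ x ∈ Icc a b, ∀ s : ℕ, f^[s] x ∈ basin → x ∈ basin := by
    intro x hx s hs
    refine ⟨hx, ?_⟩
    have h2 := hs.2
    have he : (fun n => Metric.infDist (f^[n] (f^[s] x)) orb)
        = fun n => Metric.infDist (f^[n + s] x) orb := by
      funext n; rw [← Function.iterate_add_apply]
    rw [he] at h2
    exact (tendsto_add_atTop_iff_nat s).1 h2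
  have hfwd : ∀ s : ℕ, ∀ x ∈ basin, f^[s] x ∈ basin := by
    intro s x hx
    refine ⟨hmaps.iterate s hx.1, ?_⟩
    have he : (fun n => Metric.infDist (f^[n] (f^[s] x)) orb)
        = fun n => Metric.infDist (f^[n + s] x) orb := by
      funext n; rw [← Function.iterate_add_apply]
    rw [he]
    exact (tendsto_add_atTop_iff_nat s).2 hx.2
  -- the component J
  set J := connectedComponentIn basin p with hJdef
  have hpJ : p ∈ J := mem_connectedComponentIn hp_basin
  have hJbasin : J ⊆ basin := connectedComponentIn_subset _ _
  have hJconn : IsPreconnected J := isPreconnected_connectedComponentIn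
  have hJ_ib : J ⊆ ib := by
    intro x hx
    exact Set.mem_biUnion (Finset.mem_range.2 hm0) hx
  have hib_basin : ib ⊆ basin := by
    intro x hx
    obtain ⟨i, _, hx⟩ := Set.mem_iUnion₂.1 hx
    exact connectedComponentIn_subset _ _ hx
  -- forward images of J land in ib
  have himage : ∀ i : ℕ, ∀ x ∈ J, f^[i] x ∈ ib := by
    intro i x hx
    have hconn2 : IsPreconnected (f^[i] '' J) :=
      hJconn.image _ ((contDiff_iterate f hf i).continuous.continuousOn)
    have hsub : f^[i] '' J ⊆ basin := by
      rintro y ⟨z, hz, rfl⟩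
      exact hfwd i z (hJbasin hz)
    have hpi : f^[i] p ∈ f^[i] '' J := ⟨p, hpJ, rfl⟩
    have hcc := hconn2.subset_connectedComponentIn hpi hsub
    have hx' : f^[i] x ∈ connectedComponentIn basin (f^[i] p) := hcc ⟨x, hx, rfl⟩
    rw [hmod i] at hx'
    exact Set.mem_biUnion (Finset.mem_range.2 (Nat.mod_lt i hm0)) hx'
  have hne : ∀ x ∈ J, ∀ i : ℕ, deriv f (f^[i] x) ≠ 0 :=
    fun x hx i => (hcon _ (himage i x hx)).1
  have hSneg : ∀ x ∈ J, ∀ i : ℕ, schwarzian f (f^[i] x) < 0 := fun x hx i =>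
    hS _ (hbasin_sub (hib_basin (himage i x hx))) (hne x hx i)
  have hditer : ∀ x ∈ J, ∀ n : ℕ, deriv (f^[n]) x ≠ 0 :=
    fun x hx n => deriv_iterate_ne f hfd n x (fun i _ => hne x hx i)
  have hSiter : ∀ x ∈ J, ∀ n : ℕ, 0 < n → schwarzian (f^[n]) x < 0 := fun x hx n hn =>
    schwarzian_iterate f hf n hn x (fun i _ => hne x hx i) (fun i _ => hSneg x hx i)
  -- p is in the interior of [a,b]
  have hpa : p ≠ a := (hcon p (hJ_ib hpJ)).2.1
  have hpb : p ≠ b := (hcon p (hJ_ib hpJ)).2.2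
  have hpab : p ∈ Ioo a b := ⟨lt_of_le_of_ne hp.1 (Ne.symm hpa), lt_of_le_of_ne hp.2 hpb⟩
  -- local attraction around p
  obtain ⟨δp, hδp0, hδp⟩ := attract f hf a b hmaps orb m hm0 p hp hper horb_mem hatt
  set p₁ := max a (p - δp) with hp₁def
  set p₂ := min b (p + δp) with hp₂def
  have hp₁lt : p₁ < p := max_lt hpab.1 (by linarith)
  have hp₂gt : p < p₂ := lt_min hpab.2 (by linarith)
  have hIccJ : Icc p₁ p₂ ⊆ J := by
    apply IsPreconnected.subset_connectedComponentIn isPreconnected_Icc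
      (⟨le_of_lt hp₁lt, le_of_lt hp₂gt⟩ : p ∈ Icc p₁ p₂)
    intro z hz
    have hzab : z ∈ Icc a b :=
      ⟨le_trans (le_max_left a _) hz.1, le_trans hz.2 (min_le_left b _)⟩
    refine ⟨hzab, hδp z hzab ?_⟩
    rw [abs_le]
    constructor
    · have := le_trans (le_max_right a (p - δp)) hz.1
      linarith
    · have := le_trans hz.2 (min_le_right b (p + δp))
      linarith
  -- α and β
  have hJne : J.Nonempty := ⟨p, hpJ⟩
  have hbddb : BddBelow J := ⟨a, fun x hx => (hbasin_sub (hJbasin hx)).1⟩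
  have hbdda : BddAbove J := ⟨b, fun x hx => (hbasin_sub (hJbasin hx)).2⟩
  set α := sInf J with hαdef
  set β := sSup J with hβdef
  have hαp : α < p := lt_of_le_of_lt (csInf_le hbddb (hIccJ ⟨le_rfl, by linarith⟩)) hp₁lt
  have hpβ : p < β := lt_of_lt_of_le hp₂gt (le_csSup hbdda (hIccJ ⟨by linarith, le_rfl⟩))
  have hαβ : α < β := lt_trans hαp hpβ
  have hJIcc : J ⊆ Icc α β := fun x hx => ⟨csInf_le hbddb hx, le_csSup hbdda hx⟩
  have haα : a ≤ α := le_csInf hJne fun x hx => (hbasin_sub (hJbasin hx)).1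
  have hβb : β ≤ b := csSup_le hJne fun x hx => (hbasin_sub (hJbasin hx)).2
  have hαab : α ∈ Icc a b := ⟨haα, le_trans hαβ.le hβb⟩
  have hβab : β ∈ Icc a b := ⟨le_trans haα hαβ.le, hβb⟩
  have hIooJ : Ioo α β ⊆ J := by
    intro x hx
    obtain ⟨u, huJ, hu⟩ := exists_lt_of_csInf_lt hJne hx.1
    obtain ⟨v, hvJ, hv⟩ := exists_lt_of_lt_csSup hJne hx.2
    exact (hJconn.ordConnected).out huJ hvJ ⟨le_of_lt hu, le_of_lt hv⟩
  -- F = f^[2m]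
  set F := f^[2*m] with hFdef
  have hFC : ContDiff ℝ 3 F := contDiff_iterate f hf (2*m)
  have hFd : Differentiable ℝ F := hFC.differentiable (by norm_num)
  have hFc : Continuous F := hFd.continuous
  have hFp : F p = p := by
    rw [hFdef, show 2*m = m + m by ring, Function.iterate_add_apply, hper, hper]
  have hgd : Differentiable ℝ (f^[m]) := (contDiff_iterate f hf m).differentiable (by norm_num)
  have hF_deriv_p : deriv F p = (deriv (f^[m]) p) ^ 2 := by
    rw [hFdef, show 2*m = m + m by ring, Function.iterate_add]
    rw [deriv_comp p (hgd _) (hgd _), hper]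
    ring
  have hgp_ne : deriv (f^[m]) p ≠ 0 := hditer p hpJ m
  have hFp1 : deriv F p < 1 := by
    rw [hF_deriv_p, ← sq_abs]
    nlinarith [abs_nonneg (deriv (f^[m]) p)]
  have hFp0 : 0 < deriv F p := by
    rw [hF_deriv_p]
    exact lt_of_le_of_ne (sq_nonneg _) (Ne.symm (pow_ne_zero 2 hgp_ne))
  -- F maps J to J
  have hFJ : MapsTo F J J := by
    intro x hx
    have hconn2 : IsPreconnected (F '' J) := hJconn.image _ hFc.continuousOn
    have hsub : F '' J ⊆ basin := by
      rintro y ⟨z, hz, rfl⟩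
      exact hfwd (2*m) z (hJbasin hz)
    have hmem : p ∈ F '' J := ⟨p, hpJ, hFp⟩
    exact hconn2.subset_connectedComponentIn hmem hsub ⟨x, hx, rfl⟩
  have hFIooIcc : F '' (Ioo α β) ⊆ Icc α β := by
    rintro y ⟨z, hz, rfl⟩
    exact hJIcc (hFJ (hIooJ hz))
  have hFIcc : MapsTo F (Icc α β) (Icc α β) := by
    intro x hx
    have hx' : x ∈ closure (Ioo α β) := by rw [closure_Ioo hαβ.ne]; exact hx
    have h2 : F x ∈ closure (F '' Ioo α β) :=
      image_closure_subset_closure_image hFc ⟨x, hx', rfl⟩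
    have h3 : closure (F '' Ioo α β) ⊆ Icc α β := by
      rw [← IsClosed.closure_eq isClosed_Icc]
      exact closure_mono hFIooIcc
    exact h3 h2
  -- deriv F positive on the interior
  have hFcont' : Continuous (deriv F) := (deriv_contDiff2 F hFC).continuous
  have hFderiv_ne : ∀ x ∈ Ioo α β, deriv F x ≠ 0 := fun x hx => hditer x (hIooJ hx) (2*m)
  have hpIoo : p ∈ Ioo α β := ⟨hαp, hpβ⟩
  have hFpos : ∀ x ∈ Ioo α β, 0 < deriv F x := by
    intro x hx
    rcases lt_or_gt_of_ne (hFderiv_ne x hx) with hneg | hposx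
    · exfalso
      rcases le_total x p with hxp | hpx
      · obtain ⟨c, hc, hc0⟩ := intermediate_value_Icc hxp hFcont'.continuousOn
          ⟨le_of_lt hneg, le_of_lt hFp0⟩
        exact hFderiv_ne c (Set.ordConnected_Ioo.out hx hpIoo hc) hc0
      · obtain ⟨c, hc, hc0⟩ := intermediate_value_Icc' hpx hFcont'.continuousOn
          ⟨le_of_lt hneg, le_of_lt hFp0⟩
        exact hFderiv_ne c (Set.ordConnected_Ioo.out hpIoo hx hc) hc0
    · exact hposx
  have hFmono : StrictMonoOn F (Icc α β) := by
    apply strictMonoOn_of_deriv_pos (convex_Icc α β) hFc.continuousOn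
    intro x hx
    rw [interior_Icc] at hx
    exact hFpos x hx
  -- α, β not in the basin boundary helpers
  have hαcl : α ∈ closure J := csInf_mem_closure hJne hbddb
  have hβcl : β ∈ closure J := csSup_mem_closure hJne hbdda
  have hinsα : IsPreconnected (insert α J) :=
    hJconn.subset_closure (Set.subset_insert _ _)
      (Set.insert_subset hαcl subset_closure)
  have hinsβ : IsPreconnected (insert β J) :=
    hJconn.subset_closure (Set.subset_insert _ _)
      (Set.insert_subset hβcl subset_closure)
  have hmemJ_of_basin_α : α ∈ basin → α ∈ J := by
    intro hαb
    have := hinsα.subset_connectedComponentIn (Set.mem_insert_of_mem _ hpJ)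
      (Set.insert_subset hαb hJbasin)
    exact this (Set.mem_insert _ _)
  have hmemJ_of_basin_β : β ∈ basin → β ∈ J := by
    intro hβb'
    have := hinsβ.subset_connectedComponentIn (Set.mem_insert_of_mem _ hpJ)
      (Set.insert_subset hβb' hJbasin)
    exact this (Set.mem_insert _ _)
  -- endpoint dichotomy for β
  have hβcase : F β = α ∨ F β = β := by
    by_contra hcontra
    push_neg at hcontra
    have hFβ : F β ∈ Icc α β := hFIcc ⟨hαβ.le, le_rfl⟩
    have hFβIoo : F β ∈ Ioo α β :=
      ⟨lt_of_le_of_ne hFβ.1 (Ne.symm hcontra.1), lt_of_le_of_ne hFβ.2 hcontra.2⟩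
    have hβbasin : β ∈ basin := hback β hβab (2*m) (hJbasin (hIooJ hFβIoo))
    have hβJ : β ∈ J := hmemJ_of_basin_β hβbasin
    rcases eq_or_lt_of_le hβb with hβ_eq_b | hβltb
    · exact (hcon β (hJ_ib hβJ)).2.2 hβ_eq_b
    · have hopen : IsOpen (F ⁻¹' Ioo α β) := isOpen_Ioo.preimage hFc
      obtain ⟨ε, hε0, hball⟩ := Metric.isOpen_iff.1 hopen β hFβIoo
      set ε' := min (ε/2) (b - β) with hε'def
      have hε'0 : 0 < ε' := lt_min (by linarith) (by linarith)
      have hε'b : ε' ≤ b - β := min_le_right _ _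
      have hε'ε : ε' ≤ ε / 2 := min_le_left _ _
      have hIccB : Icc β (β + ε') ⊆ basin := by
        intro z hz
        have hzab : z ∈ Icc a b :=
          ⟨le_trans hβab.1 hz.1, by linarith [hz.2]⟩
        apply hback z hzab (2*m)
        have hzb : z ∈ Metric.ball β ε := by
          rw [Metric.mem_ball, Real.dist_eq, abs_sub_lt_iff]
          constructor <;> [skip; skip] <;> linarith [hz.1, hz.2]
        exact hJbasin (hIooJ (hball hzb))
      have hconnU : IsPreconnected (insert β J ∪ Icc β (β + ε')) :=
        IsPreconnected.union β (Set.mem_insert _ _) (Set.left_mem_Icc.2 (by linarith))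
          hinsβ isPreconnected_Icc
      have hsubU : insert β J ∪ Icc β (β + ε') ⊆ basin :=
        Set.union_subset (Set.insert_subset hβbasin hJbasin) hIccB
      have hJ' := hconnU.subset_connectedComponentIn
        (Set.mem_union_left _ (Set.mem_insert_of_mem _ hpJ)) hsubU
      have hm' : β + ε' ∈ J := hJ' (Set.mem_union_right _ (Set.right_mem_Icc.2 (by linarith)))
      have : β + ε' ≤ β := le_csSup hbdda hm'
      linarith
  -- endpoint dichotomy for α
  have hαcase : F α = α ∨ F α = β := by
    by_contra hcontra
    push_neg at hcontra
    have hFα : F α ∈ Icc α β := hFIcc ⟨le_rfl, hαβ.le⟩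
    have hFαIoo : F α ∈ Ioo α β :=
      ⟨lt_of_le_of_ne hFα.1 (Ne.symm hcontra.1), lt_of_le_of_ne hFα.2 hcontra.2⟩
    have hαbasin : α ∈ basin := hback α hαab (2*m) (hJbasin (hIooJ hFαIoo))
    have hαJ : α ∈ J := hmemJ_of_basin_α hαbasin
    rcases eq_or_lt_of_le haα with ha_eq_α | haltα
    · exact (hcon α (hJ_ib hαJ)).2.1 ha_eq_α.symm
    · have hopen : IsOpen (F ⁻¹' Ioo α β) := isOpen_Ioo.preimage hFc
      obtain ⟨ε, hε0, hball⟩ := Metric.isOpen_iff.1 hopen α hFαIoo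
      set ε' := min (ε/2) (α - a) with hε'def
      have hε'0 : 0 < ε' := lt_min (by linarith) (by linarith)
      have hε'a : ε' ≤ α - a := min_le_right _ _
      have hε'ε : ε' ≤ ε / 2 := min_le_left _ _
      have hIccB : Icc (α - ε') α ⊆ basin := by
        intro z hz
        have hzab : z ∈ Icc a b :=
          ⟨by linarith [hz.1], le_trans hz.2 hαab.2⟩
        apply hback z hzab (2*m)
        have hzb : z ∈ Metric.ball α ε := by
          rw [Metric.mem_ball, Real.dist_eq, abs_sub_lt_iff]
          constructor <;> linarith [hz.1, hz.2]
        exact hJbasin (hIooJ (hball hzb))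
      have hconnU : IsPreconnected (insert α J ∪ Icc (α - ε') α) :=
        IsPreconnected.union α (Set.mem_insert _ _) (Set.right_mem_Icc.2 (by linarith))
          hinsα isPreconnected_Icc
      have hsubU : insert α J ∪ Icc (α - ε') α ⊆ basin :=
        Set.union_subset (Set.insert_subset hαbasin hJbasin) hIccB
      have hJ' := hconnU.subset_connectedComponentIn
        (Set.mem_union_left _ (Set.mem_insert_of_mem _ hpJ)) hsubU
      have hm' : α - ε' ∈ J := hJ' (Set.mem_union_right _ (Set.left_mem_Icc.2 (by linarith)))
      have : α ≤ α - ε' := csInf_le hbddb hm'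
      linarith
  -- F fixes α and β
  have hFα : F α = α := by
    rcases hαcase with h1 | h1
    · exact h1
    · exfalso
      rcases hβcase with h2 | h2
      · have := hFmono (Set.left_mem_Icc.2 hαβ.le) (Set.right_mem_Icc.2 hαβ.le) hαβ
        rw [h1, h2] at this
        linarith
      · have := hFmono (Set.left_mem_Icc.2 hαβ.le) (Set.right_mem_Icc.2 hαβ.le) hαβ
        rw [h1, h2] at this
        linarith
  have hFβ : F β = β := by
    rcases hβcase with h2 | h2
    · exfalso
      have := hFmono (Set.left_mem_Icc.2 hαβ.le) (Set.right_mem_Icc.2 hαβ.le) hαβ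
      rw [hFα, h2] at this
      linarith
    · exact h2
  -- derivative of F is constant on the orbit
  have hFface : ∀ q ∈ orb, deriv F q = deriv F p := by
    rintro q ⟨j, _, rfl⟩
    have hjd : Differentiable ℝ (f^[j]) := (contDiff_iterate f hf j).differentiable (by norm_num)
    have hcomm1 : deriv (f^[j + 2*m]) p = deriv (f^[j]) p * deriv F p := by
      rw [Function.iterate_add, deriv_comp p (hjd _) (hFd _)]
      rw [hFp]
    have hcomm2 : deriv (f^[j + 2*m]) p = deriv F (f^[j] p) * deriv (f^[j]) p := by
      rw [show j + 2*m = 2*m + j by ring, Function.iterate_add, deriv_comp p (hFd _) (hjd _)]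
    have hj0 : deriv (f^[j]) p ≠ 0 := hditer p hpJ j
    have heq : deriv F (f^[j] p) * deriv (f^[j]) p = deriv F p * deriv (f^[j]) p := by
      rw [← hcomm2, hcomm1]; ring
    exact mul_right_cancel₀ hj0 heq
  have horb_basin' : ∀ q ∈ orb, q ∈ basin := by
    rintro q ⟨j, _, rfl⟩
    exact horb_basin j
  have hmonoF : MonotoneOn F (Icc α β) := hFmono.monotoneOn
  -- the endpoints are not on the orbit
  have hα_notorb : α ∉ orb := by
    intro hαorb
    have hfixα : f^[2*m] α = α := hFα
    have horbα : ∀ r : ℕ, f^[r] α ∈ orb := by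
      obtain ⟨j, _, hje⟩ := hαorb
      intro r
      rw [← hje, ← Function.iterate_add_apply]
      exact horb_mem (r + j)
    have hmultα : |deriv (f^[2*m]) α| < 1 := by
      have heq : deriv F α = deriv F p := hFface α hαorb
      rw [← hFdef, heq, abs_of_pos hFp0]
      exact hFp1
    obtain ⟨δ₂, hδ₂0, hδ₂⟩ := attract f hf a b hmaps orb (2*m) hm2 α hαab hfixα horbα hmultα
    have hαbasin : α ∈ basin := horb_basin' α hαorb
    have hαJ : α ∈ J := hmemJ_of_basin_α hαbasin
    rcases eq_or_lt_of_le haα with ha_eq | halt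
    · exact (hcon α (hJ_ib hαJ)).2.1 ha_eq.symm
    · set y := max a (α - δ₂) with hydef
      have hy1 : y < α := max_lt halt (by linarith)
      have hya : a ≤ y := le_max_left _ _
      have hIccy : Icc y α ⊆ basin := by
        intro z hz
        have hz1 : z ∈ Icc a b := ⟨le_trans hya hz.1, le_trans hz.2 hαab.2⟩
        refine ⟨hz1, hδ₂ z hz1 ?_⟩
        rw [abs_le]
        constructor
        · have := le_trans (le_max_right a (α - δ₂)) hz.1
          linarith
        · linarith [hz.2]
      have hconnU : IsPreconnected (insert α J ∪ Icc y α) :=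
        IsPreconnected.union α (Set.mem_insert _ _) (Set.right_mem_Icc.2 hy1.le)
          hinsα isPreconnected_Icc
      have hsubU : insert α J ∪ Icc y α ⊆ basin :=
        Set.union_subset (Set.insert_subset hαbasin hJbasin) hIccy
      have hJ' := hconnU.subset_connectedComponentIn
        (Set.mem_union_left _ (Set.mem_insert_of_mem _ hpJ)) hsubU
      have hyJ : y ∈ J := hJ' (Set.mem_union_right _ (Set.left_mem_Icc.2 hy1.le))
      have : α ≤ y := csInf_le hbddb hyJ
      linarith
  have hβ_notorb : β ∉ orb := by
    intro hβorb
    have hfixβ : f^[2*m] β = β := hFβ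
    have horbβ : ∀ r : ℕ, f^[r] β ∈ orb := by
      obtain ⟨j, _, hje⟩ := hβorb
      intro r
      rw [← hje, ← Function.iterate_add_apply]
      exact horb_mem (r + j)
    have hmultβ : |deriv (f^[2*m]) β| < 1 := by
      have heq : deriv F β = deriv F p := hFface β hβorb
      rw [← hFdef, heq, abs_of_pos hFp0]
      exact hFp1
    obtain ⟨δ₂, hδ₂0, hδ₂⟩ := attract f hf a b hmaps orb (2*m) hm2 β hβab hfixβ horbβ hmultβ
    have hβbasin : β ∈ basin := horb_basin' β hβorb
    have hβJ : β ∈ J := hmemJ_of_basin_β hβbasin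
    rcases eq_or_lt_of_le hβb with hβ_eq | hblt
    · exact (hcon β (hJ_ib hβJ)).2.2 hβ_eq
    · set y := min b (β + δ₂) with hydef
      have hy1 : β < y := lt_min hblt (by linarith)
      have hyb : y ≤ b := min_le_left _ _
      have hIccy : Icc β y ⊆ basin := by
        intro z hz
        have hz1 : z ∈ Icc a b := ⟨le_trans hβab.1 hz.1, le_trans hz.2 hyb⟩
        refine ⟨hz1, hδ₂ z hz1 ?_⟩
        rw [abs_le]
        constructor
        · linarith [hz.1]
        · have := le_trans hz.2 (min_le_right b (β + δ₂))
          linarith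
      have hconnU : IsPreconnected (insert β J ∪ Icc β y) :=
        IsPreconnected.union β (Set.mem_insert _ _) (Set.left_mem_Icc.2 hy1.le)
          hinsβ isPreconnected_Icc
      have hsubU : insert β J ∪ Icc β y ⊆ basin :=
        Set.union_subset (Set.insert_subset hβbasin hJbasin) hIccy
      have hJ' := hconnU.subset_connectedComponentIn
        (Set.mem_union_left _ (Set.mem_insert_of_mem _ hpJ)) hsubU
      have hyJ : y ∈ J := hJ' (Set.mem_union_right _ (Set.right_mem_Icc.2 hy1.le))
      have : y ≤ β := le_csSup hbdda hyJ
      linarith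
  -- derivative at the left endpoint is at least 1
  have hvα : 1 ≤ deriv F α := by
    by_contra hlt'
    push_neg at hlt'
    set ε₀ := Metric.infDist α orb with hε₀def
    have hε₀pos : 0 < ε₀ := (IsClosed.notMem_iff_infDist_pos horb_closed horb_ne).1 hα_notorb
    set c := min β (α + ε₀) with hcdef
    have hαc : α < c := lt_min hαβ (by linarith)
    have hdF : Tendsto (slope F α) (𝓝[≠] α) (𝓝 (deriv F α)) :=
      hasDerivAt_iff_tendsto_slope.1 (hFd α).hasDerivAt
    have hslope : ∀ᶠ z in 𝓝[>] α, slope F α z < 1 :=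
      (hdF.mono_left (nhdsWithin_mono α fun z hz => ne_of_gt hz)).eventually_lt_const hlt'
    have hIoo : Ioo α c ∈ 𝓝[>] α := Ioo_mem_nhdsGT_of_mem ⟨le_rfl, hαc⟩
    obtain ⟨x, hx1, hx2⟩ := (hslope.and (eventually_of_mem hIoo fun z hz => hz)).exists
    have hxα : α < x := hx2.1
    have hFx : F x < x := by
      rw [slope_def_field, hFα] at hx1
      have := (div_lt_one (by linarith : (0:ℝ) < x - α)).1 hx1
      linarith
    have hxβ : x < β := lt_of_lt_of_le hx2.2 (min_le_left _ _)
    have hxJ : x ∈ Ioo α β := ⟨hxα, hxβ⟩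
    set s : ℕ → ℝ := fun n => F^[n] x with hs
    have e0 : s 0 = x := rfl
    have estep : ∀ n, s (n+1) = F (s n) := fun n => Function.iterate_succ_apply' F n x
    have hsIcc : ∀ n, s n ∈ Icc α x := by
      intro n
      induction n with
      | zero => exact ⟨hxα.le, le_rfl⟩
      | succ n ih =>
        have hsnIcc : s n ∈ Icc α β := ⟨ih.1, le_trans ih.2 hxβ.le⟩
        rw [estep n]
        constructor
        · calc α = F α := hFα.symm
          _ ≤ F (s n) := hmonoF (Set.left_mem_Icc.2 hαβ.le) hsnIcc ih.1
        · calc F (s n) ≤ F x := hmonoF hsnIcc ⟨hxα.le, hxβ.le⟩ ih.2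
          _ ≤ x := hFx.le
    have hmem : ∀ n, s n ∈ Icc α β := fun n => ⟨(hsIcc n).1, le_trans (hsIcc n).2 hxβ.le⟩
    have hanti : Antitone s := by
      apply antitone_nat_of_succ_le
      intro n
      induction n with
      | zero =>
        rw [estep 0, e0]
        exact hFx.le
      | succ n ih =>
        calc s (n+2) = F (s (n+1)) := estep (n+1)
        _ ≤ F (s n) := hmonoF (hmem (n+1)) (hmem n) ih
        _ = s (n+1) := (estep n).symm
    have hbdds : BddBelow (Set.range s) := ⟨α, by rintro _ ⟨n, rfl⟩; exact (hsIcc n).1⟩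
    have hq := tendsto_atTop_ciInf hanti hbdds
    set q := ⨅ n, s n with hqdef
    have hqα : α ≤ q := le_ciInf fun n => (hsIcc n).1
    have hqx : q ≤ x := e0 ▸ ciInf_le hbdds 0
    have hFq : F q = q := by
      have h1 : Tendsto (fun n => s (n+1)) atTop (𝓝 q) := (tendsto_add_atTop_iff_nat 1).2 hq
      have h2 : Tendsto (fun n => F (s n)) atTop (𝓝 (F q)) := (hFc.continuousAt.tendsto).comp hq
      have he : (fun n => F (s n)) = fun n => s (n+1) := funext fun n => (estep n).symm
      rw [he] at h2
      exact tendsto_nhds_unique h2 h1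
    have hqorb : q ∈ orb := by
      have hxbasin : x ∈ basin := hJbasin (hIooJ hxJ)
      have hsub : Tendsto (fun n : ℕ => 2*m*n) atTop atTop :=
        Filter.tendsto_atTop_atTop.mpr fun N => ⟨N, fun n hn => le_trans hn (Nat.le_mul_of_pos_left n hm2)⟩
      have h2 : Tendsto (fun n => Metric.infDist (f^[2*m*n] x) orb) atTop (𝓝 0) :=
        hxbasin.2.comp hsub
      have he : (fun n => Metric.infDist (f^[2*m*n] x) orb) = fun n => Metric.infDist (s n) orb := by
        funext n
        rw [Function.iterate_mul]
      rw [he] at h2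
      have h3 : Tendsto (fun n => Metric.infDist (s n) orb) atTop (𝓝 (Metric.infDist q orb)) :=
        ((Metric.continuous_infDist_pt orb).tendsto q).comp hq
      exact (IsClosed.mem_iff_infDist_zero horb_closed horb_ne).2 (tendsto_nhds_unique h3 h2)
    have hqα' : α < q := lt_of_le_of_ne hqα fun h => hα_notorb (h ▸ hqorb)
    have hd1 : ε₀ ≤ q - α := by
      have h2 := Metric.infDist_le_dist_of_mem (x := α) hqorb
      rw [Real.dist_eq, abs_of_nonpos (by linarith : α - q ≤ 0)] at h2
      rw [hε₀def]
      linarith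
    have hd2 : q - α < ε₀ := by
      have hxc : x < c := hx2.2
      have hcε : c ≤ α + ε₀ := min_le_right _ _
      linarith
    linarith
  -- derivative at the right endpoint is at least 1
  have hvβ : 1 ≤ deriv F β := by
    by_contra hlt'
    push_neg at hlt'
    set ε₀ := Metric.infDist β orb with hε₀def
    have hε₀pos : 0 < ε₀ := (IsClosed.notMem_iff_infDist_pos horb_closed horb_ne).1 hβ_notorb
    set c := max α (β - ε₀) with hcdef
    have hcβ : c < β := max_lt hαβ (by linarith)
    have hdF : Tendsto (slope F β) (𝓝[≠] β) (𝓝 (deriv F β)) :=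
      hasDerivAt_iff_tendsto_slope.1 (hFd β).hasDerivAt
    have hslope : ∀ᶠ z in 𝓝[<] β, slope F β z < 1 :=
      (hdF.mono_left (nhdsWithin_mono β fun z hz => ne_of_lt hz)).eventually_lt_const hlt'
    have hIoo : Ioo c β ∈ 𝓝[<] β := Ioo_mem_nhdsLT_of_mem ⟨hcβ, le_rfl⟩
    obtain ⟨x, hx1, hx2⟩ := (hslope.and (eventually_of_mem hIoo fun z hz => hz)).exists
    have hxβ : x < β := hx2.2
    have hFx : x < F x := by
      rw [slope_comm, slope_def_field, hFβ] at hx1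
      have := (div_lt_one (by linarith : (0:ℝ) < β - x)).1 hx1
      linarith
    have hxα : α < x := lt_of_le_of_lt (le_max_left _ _) hx2.1
    have hxJ : x ∈ Ioo α β := ⟨hxα, hxβ⟩
    set s : ℕ → ℝ := fun n => F^[n] x with hs
    have e0 : s 0 = x := rfl
    have estep : ∀ n, s (n+1) = F (s n) := fun n => Function.iterate_succ_apply' F n x
    have hsIcc : ∀ n, s n ∈ Icc x β := by
      intro n
      induction n with
      | zero => exact ⟨le_rfl, hxβ.le⟩
      | succ n ih =>
        have hsnIcc : s n ∈ Icc α β := ⟨le_trans hxα.le ih.1, ih.2⟩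
        rw [estep n]
        constructor
        · calc x ≤ F x := hFx.le
          _ ≤ F (s n) := hmonoF ⟨hxα.le, hxβ.le⟩ hsnIcc ih.1
        · calc F (s n) ≤ F β := hmonoF hsnIcc (Set.right_mem_Icc.2 hαβ.le) ih.2
          _ = β := hFβ
    have hmem : ∀ n, s n ∈ Icc α β := fun n => ⟨le_trans hxα.le (hsIcc n).1, (hsIcc n).2⟩
    have hmono : Monotone s := by
      apply monotone_nat_of_le_succ
      intro n
      induction n with
      | zero =>
        rw [estep 0, e0]
        exact hFx.le
      | succ n ih =>
        calc s (n+1) = F (s n) := estep n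
        _ ≤ F (s (n+1)) := hmonoF (hmem n) (hmem (n+1)) ih
        _ = s (n+2) := (estep (n+1)).symm
    have hbdds : BddAbove (Set.range s) := ⟨β, by rintro _ ⟨n, rfl⟩; exact (hsIcc n).2⟩
    have hq := tendsto_atTop_ciSup hmono hbdds
    set q := ⨆ n, s n with hqdef
    have hqβ : q ≤ β := ciSup_le fun n => (hsIcc n).2
    have hqx : x ≤ q := e0 ▸ le_ciSup hbdds 0
    have hFq : F q = q := by
      have h1 : Tendsto (fun n => s (n+1)) atTop (𝓝 q) := (tendsto_add_atTop_iff_nat 1).2 hq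
      have h2 : Tendsto (fun n => F (s n)) atTop (𝓝 (F q)) := (hFc.continuousAt.tendsto).comp hq
      have he : (fun n => F (s n)) = fun n => s (n+1) := funext fun n => (estep n).symm
      rw [he] at h2
      exact tendsto_nhds_unique h2 h1
    have hqorb : q ∈ orb := by
      have hxbasin : x ∈ basin := hJbasin (hIooJ hxJ)
      have hsub : Tendsto (fun n : ℕ => 2*m*n) atTop atTop :=
        Filter.tendsto_atTop_atTop.mpr fun N => ⟨N, fun n hn => le_trans hn (Nat.le_mul_of_pos_left n hm2)⟩
      have h2 : Tendsto (fun n => Metric.infDist (f^[2*m*n] x) orb) atTop (𝓝 0) :=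
        hxbasin.2.comp hsub
      have he : (fun n => Metric.infDist (f^[2*m*n] x) orb) = fun n => Metric.infDist (s n) orb := by
        funext n
        rw [Function.iterate_mul]
      rw [he] at h2
      have h3 : Tendsto (fun n => Metric.infDist (s n) orb) atTop (𝓝 (Metric.infDist q orb)) :=
        ((Metric.continuous_infDist_pt orb).tendsto q).comp hq
      exact (IsClosed.mem_iff_infDist_zero horb_closed horb_ne).2 (tendsto_nhds_unique h3 h2)
    have hqβ' : q < β := lt_of_le_of_ne hqβ fun h => hβ_notorb (h ▸ hqorb)
    have hd1 : ε₀ ≤ β - q := by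
      have h2 := Metric.infDist_le_dist_of_mem (x := β) hqorb
      rw [Real.dist_eq, abs_of_nonneg (by linarith : (0:ℝ) ≤ β - q)] at h2
      rw [hε₀def]
      linarith
    have hd2 : β - q < ε₀ := by
      have hxc : c < x := hx2.1
      have hcε : β - ε₀ ≤ c := le_max_right _ _
      linarith
    linarith
  -- conclusion via the minimum principle
  have hSF : ∀ x ∈ Ioo α β, schwarzian F x < 0 := fun x hx => hSiter x (hIooJ hx) (2*m) hm2
  have hminp := min_principle F α β p hFC hαp hpβ hFpos hSF
  have hge : (1:ℝ) ≤ deriv F p := le_trans (le_min hvα hvβ) hminp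
  linarith
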